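/- arXiv:2502.05520 — 2 statements merged into one kernel-verified Lean document; each statement's English description precedes it below -/
import Mathlib

section
/- Let c and r be positive integers and let λ be a real number with ⌊λ²⌋ ≥ 2. Let G be a finite simple graph that is μ-bounded with parameter c and whose smallest adjacency eigenvalue satisfies λ_min(G) ≥ −λ. If x is a vertex of G such that every maximal clique of G containing x has order at most d(x) − r, then there exist two distinct maximal cliques C₁ and C₂ of G containing x such that the order of C₁ is at least (d(x) − (⌊λ²⌋ choose 2)·(c−1))/⌊λ²⌋ + 1 and the order of C₂ is at least (r − (⌊λ²⌋ choose 2)·(c−1) + 1)/(⌊λ²⌋ − 1) + 1. -/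
open Finset Matrix
open scoped Pointwise

/-- `G` is μ-bounded with parameter `c`: every pair of distinct non-adjacent vertices
has at most `c` common neighbors. -/
def MuBounded {V : Type*} [Fintype V] [DecidableEq V] (G : SimpleGraph V)
    [DecidableRel G.Adj] (c : ℕ) : Prop :=
  ∀ u v : V, u ≠ v → ¬ G.Adj u v →
    ((G.neighborFinset u) ∩ (G.neighborFinset v)).card ≤ c

/-- `s` is a maximal clique of `G`. -/
def IsMaximalCliqueF {V : Type*} (G : SimpleGraph V) (s : Finset V) : Prop :=
  G.IsClique (s : Set V) ∧ ∀ t : Finset V, G.IsClique (t : Set V) → s ⊆ t → s = t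

/-- Every (real) eigenvalue of the adjacency matrix of `G` is at least `r`,
i.e. `λ_min(G) ≥ r`. -/
def MinEigGE {V : Type*} [Fintype V] [DecidableEq V] (G : SimpleGraph V)
    [DecidableRel G.Adj] (r : ℝ) : Prop :=
  ∀ μ ∈ spectrum ℝ (G.adjMatrix ℝ), r ≤ μ

lemma indep_card_le_floor {V : Type*} [Fintype V] [DecidableEq V]
    (G : SimpleGraph V) [DecidableRel G.Adj] (lam : ℝ)
    (heig : MinEigGE G (-lam)) (x : V) (I : Finset V)
    (hIN : I ⊆ G.neighborFinset x)
    (hind : ∀ u ∈ I, ∀ w ∈ I, u ≠ w → ¬ G.Adj u w) :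
    I.card ≤ ⌊lam ^ 2⌋₊ := by
  classical
  apply Nat.le_floor
  rcases Nat.eq_zero_or_pos I.card with h0 | hpos
  · rw [h0]; simpa using sq_nonneg lam
  set m : ℝ := (I.card : ℝ) with hm
  have hm1 : 1 ≤ m := by rw [hm]; exact_mod_cast hpos
  -- The shifted adjacency matrix is PSD
  have hH : (G.adjMatrix ℝ + lam • (1 : Matrix V V ℝ)).IsHermitian := by
    show (G.adjMatrix ℝ + lam • (1 : Matrix V V ℝ))ᴴ = _
    rw [Matrix.conjTranspose_eq_transpose_of_trivial, Matrix.transpose_add,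
      Matrix.transpose_smul, Matrix.transpose_one, (SimpleGraph.isSymm_adjMatrix G).eq]
  have hPSD : (G.adjMatrix ℝ + lam • (1 : Matrix V V ℝ)).PosSemidef := by
    refine (Matrix.IsHermitian.posSemidef_iff_eigenvalues_nonneg hH).mpr fun i => show (0:ℝ) ≤ _ from ?_
    have hmem := Matrix.IsHermitian.eigenvalues_mem_spectrum_real hH i
    have hspec : spectrum ℝ (G.adjMatrix ℝ + lam • (1 : Matrix V V ℝ))
        = ({lam} : Set ℝ) + spectrum ℝ (G.adjMatrix ℝ) := by
      rw [add_comm (G.adjMatrix ℝ), ← Algebra.algebraMap_eq_smul_one,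
        spectrum.singleton_add_eq]
    rw [hspec] at hmem
    obtain ⟨a, ha, b, hb, hab⟩ := Set.mem_add.mp hmem
    have hba := heig b hb
    rw [Set.mem_singleton_iff] at ha
    subst ha
    linarith [hab ▸ (by linarith : (0:ℝ) ≤ a + b)]
  have hxI : x ∉ I := fun h => (G.notMem_neighborFinset_self x) (hIN h)
  have key : ∀ a : ℝ, 0 ≤ lam * (a * a) + (2 * m) * a + lam * m := by
    intro a
    set v : V → ℝ := fun u => if u = x then a else if u ∈ I then 1 else 0 with hv
    have hq := hPSD.dotProduct_mulVec_nonneg v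
    have hstar : star v = v := by funext u; simp
    rw [hstar, Matrix.add_mulVec, Matrix.smul_mulVec, Matrix.one_mulVec,
      dotProduct_add, dotProduct_smul] at hq
    have hsub : ∀ u ∈ (univ : Finset V), u ∉ insert x I → v u = 0 := by
      intro u _ hu
      simp only [Finset.mem_insert, not_or] at hu
      simp [hv, hu.1, hu.2]
    have hvx : v x = a := by simp [hv]
    have hvI : ∀ u ∈ I, v u = 1 := by
      intro u hu
      have : u ≠ x := fun h => hxI (h ▸ hu)
      simp [hv, this, hu]
    have hAv : dotProduct v (G.adjMatrix ℝ *ᵥ v) = 2 * m * a := by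
      unfold dotProduct
      rw [← Finset.sum_subset (Finset.subset_univ (insert x I))
            (fun u hu h2 => by rw [hsub u hu h2, zero_mul])]
      rw [Finset.sum_insert hxI]
      have h1 : (G.adjMatrix ℝ *ᵥ v) x = m := by
        rw [SimpleGraph.adjMatrix_mulVec_apply]
        have hc : ∀ w ∈ G.neighborFinset x, v w = if w ∈ I then (1:ℝ) else 0 := by
          intro w hw
          have hwx : w ≠ x := fun h => (G.notMem_neighborFinset_self x) (h ▸ hw)
          simp [hv, hwx]
        rw [Finset.sum_congr rfl hc, Finset.sum_ite_mem,
          Finset.inter_eq_right.mpr hIN, Finset.sum_const, nsmul_eq_mul, mul_one]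
      have h2 : ∀ u ∈ I, (G.adjMatrix ℝ *ᵥ v) u = a := by
        intro u hu
        rw [SimpleGraph.adjMatrix_mulVec_apply]
        have hxu : x ∈ G.neighborFinset u := by
          rw [SimpleGraph.mem_neighborFinset]
          exact ((SimpleGraph.mem_neighborFinset G x u).mp (hIN hu)).symm
        rw [Finset.sum_eq_single_of_mem x hxu ?_, hvx]
        intro w hw hwx
        have hadj : G.Adj u w := (SimpleGraph.mem_neighborFinset G u w).mp hw
        have hwI : w ∉ I := fun hwI => hind u hu w hwI hadj.ne hadj
        simp [hv, hwx, hwI]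
      rw [h1, hvx, Finset.sum_congr rfl (fun u hu => by rw [h2 u hu, hvI u hu, one_mul]),
        Finset.sum_const, nsmul_eq_mul]
      ring
    have hvv : dotProduct v v = a ^ 2 + m := by
      unfold dotProduct
      rw [← Finset.sum_subset (Finset.subset_univ (insert x I))
            (fun u hu h2 => by rw [hsub u hu h2, zero_mul])]
      rw [Finset.sum_insert hxI, hvx,
        Finset.sum_congr rfl (fun u hu => by rw [hvI u hu, one_mul]),
        Finset.sum_const, nsmul_eq_mul, mul_one]
      ring
    rw [hAv, hvv] at hq
    rw [smul_eq_mul] at hq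
    nlinarith [hq]
  have hdisc := discrim_le_zero key
  rw [discrim] at hdisc
  nlinarith [hdisc, hm1]

lemma exists_maximal_clique_ext {V : Type*} [Fintype V] [DecidableEq V]
    (G : SimpleGraph V) (s : Finset V) (hs : G.IsClique (s : Set V)) :
    ∃ t : Finset V, IsMaximalCliqueF G t ∧ s ⊆ t := by
  classical
  obtain ⟨t, ht, hmax⟩ := Finset.exists_max_image
    ((univ : Finset (Finset V)).filter fun t : Finset V => G.IsClique (↑t : Set V) ∧ s ⊆ t)
    Finset.card ⟨s, by simp [hs]⟩
  simp only [Finset.mem_filter, Finset.mem_univ, true_and] at ht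
  refine ⟨t, ⟨ht.1, fun t' ht' hsub => ?_⟩, ht.2⟩
  have : t'.card ≤ t.card := by
    refine hmax t' ?_
    simp only [Finset.mem_filter, Finset.mem_univ, true_and]
    exact ⟨ht', ht.2.trans hsub⟩
  exact Finset.eq_of_subset_of_card_le hsub this

set_option maxHeartbeats 2000000 in
theorem statement1 {V : Type*} [Fintype V] [DecidableEq V]
    (G : SimpleGraph V) [DecidableRel G.Adj]
    (c r : ℕ) (hc : 0 < c) (hr : 0 < r) (lam : ℝ) (hlam : 2 ≤ ⌊lam ^ 2⌋₊)
    (hmu : MuBounded G c) (heig : MinEigGE G (-lam)) (x : V)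
    (hmax : ∀ s : Finset V, IsMaximalCliqueF G s → x ∈ s →
      (s.card : ℤ) ≤ (G.degree x : ℤ) - r) :
    ∃ C₁ C₂ : Finset V, C₁ ≠ C₂ ∧
      IsMaximalCliqueF G C₁ ∧ IsMaximalCliqueF G C₂ ∧ x ∈ C₁ ∧ x ∈ C₂ ∧
      ((G.degree x : ℝ) - (Nat.choose ⌊lam ^ 2⌋₊ 2 : ℝ) * ((c : ℝ) - 1)) / (⌊lam ^ 2⌋₊ : ℝ) + 1
        ≤ (C₁.card : ℝ) ∧
      ((r : ℝ) - (Nat.choose ⌊lam ^ 2⌋₊ 2 : ℝ) * ((c : ℝ) - 1) + 1) / ((⌊lam ^ 2⌋₊ : ℝ) - 1) + 1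
        ≤ (C₂.card : ℝ) := by
  classical
  set k := ⌊lam ^ 2⌋₊ with hk
  set N := G.neighborFinset x with hN
  set d := G.degree x with hd
  have hxN : x ∉ N := G.notMem_neighborFinset_self x
  have hNd : N.card = d := rfl
  set E : ℕ := k.choose 2 * (c - 1) with hE
  have h1c : 1 ≤ c := hc
  have hEr : ((E : ℝ)) = (k.choose 2 : ℝ) * ((c : ℝ) - 1) := by
    rw [hE, Nat.cast_mul, Nat.cast_sub h1c, Nat.cast_one]
  have hk2 : (2 : ℝ) ≤ (k : ℝ) := by exact_mod_cast hlam
  have hkpos : (0 : ℝ) < (k : ℝ) := by linarith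
  have hk1pos : (0 : ℝ) < (k : ℝ) - 1 := by linarith
  -- maximum independent set in the neighborhood
  set P : Finset V → Prop := fun I => ∀ u ∈ I, ∀ w ∈ I, u ≠ w → ¬ G.Adj u w with hP
  obtain ⟨I, hIF, hImax⟩ := Finset.exists_max_image (N.powerset.filter P) Finset.card
    ⟨∅, by simp [hP]⟩
  rw [Finset.mem_filter, Finset.mem_powerset] at hIF
  obtain ⟨hIN, hIind⟩ := hIF
  set t := I.card with ht
  have htk : t ≤ k := indep_card_le_floor G lam heig x I hIN hIind
  have hmaxI : ∀ J : Finset V, J ⊆ N → P J → J.card ≤ t := fun J hJ hPJ =>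
    hImax J (by rw [Finset.mem_filter, Finset.mem_powerset]; exact ⟨hJ, hPJ⟩)
  -- the clique pieces and the bad set
  set S : V → Finset V := fun y =>
    N.filter (fun z => (z = y ∨ G.Adj y z) ∧ ∀ w ∈ I, w ≠ y → ¬ G.Adj w z) with hS
  set B : Finset V :=
    N.filter (fun z => ∃ y ∈ I, ∃ w ∈ I, y ≠ w ∧ G.Adj y z ∧ G.Adj w z) with hB
  have hSN : ∀ y, ∀ z ∈ S y, z ∈ N := fun y z hz => (Finset.mem_filter.mp hz).1
  have hSmem : ∀ y, ∀ z ∈ S y,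
      (z = y ∨ G.Adj y z) ∧ ∀ w ∈ I, w ≠ y → ¬ G.Adj w z :=
    fun y z hz => (Finset.mem_filter.mp hz).2
  -- covering claim
  have hcover : ∀ z ∈ N, z ∉ B → ∃ y ∈ I, z ∈ S y := by
    intro z hz hzB
    have h1 : ∃ y ∈ I, z = y ∨ G.Adj y z := by
      by_contra h
      push_neg at h
      have hzI : z ∉ I := fun hzI => (h z hzI).1 rfl
      have hJP : P (insert z I) := by
        intro u hu w hw hne
        rcases Finset.mem_insert.mp hu with rfl | hu' <;>
          rcases Finset.mem_insert.mp hw with rfl | hw'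
        · exact absurd rfl hne
        · exact fun hadj => (h w hw').2 hadj.symm
        · exact fun hadj => (h u hu').2 hadj
        · exact hIind u hu' w hw' hne
      have := hmaxI (insert z I) (Finset.insert_subset hz hIN) hJP
      rw [Finset.card_insert_of_notMem hzI] at this
      omega
    obtain ⟨y, hyI, hy⟩ := h1
    refine ⟨y, hyI, Finset.mem_filter.mpr ⟨hz, hy, ?_⟩⟩
    intro w hwI hwy hadj
    rcases hy with rfl | hadjy
    · exact hIind w hwI _ hyI hwy hadj
    · exact hzB (Finset.mem_filter.mpr ⟨hz, y, hyI, w, hwI, fun he => hwy he.symm, hadjy, hadj⟩)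
  -- bound on the bad set
  have hBcard : B.card ≤ E := by
    have hBsub : B ⊆ (Finset.powersetCard 2 I).biUnion
        (fun p => N.filter (fun z => ∀ y ∈ p, G.Adj y z)) := by
      intro z hz
      rw [Finset.mem_filter] at hz
      obtain ⟨y, hy, w, hw, hyw, hadj1, hadj2⟩ := hz.2
      rw [Finset.mem_biUnion]
      refine ⟨{y, w}, ?_, ?_⟩
      · rw [Finset.mem_powersetCard]
        exact ⟨Finset.insert_subset hy (Finset.singleton_subset_iff.mpr hw),
          Finset.card_pair hyw⟩
      · rw [Finset.mem_filter]
        refine ⟨hz.1, ?_⟩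
        intro a ha
        rcases Finset.mem_insert.mp ha with rfl | ha
        · exact hadj1
        · rw [Finset.mem_singleton] at ha; subst ha; exact hadj2
    have hW : ∀ p ∈ Finset.powersetCard 2 I,
        (N.filter (fun z => ∀ y ∈ p, G.Adj y z)).card ≤ c - 1 := by
      intro p hp
      rw [Finset.mem_powersetCard] at hp
      obtain ⟨y, w, hyw, rfl⟩ := Finset.card_eq_two.mp hp.2
      have hyI : y ∈ I := hp.1 (by simp)
      have hwI : w ∈ I := hp.1 (by simp)
      have hnadj : ¬ G.Adj y w := hIind y hyI w hwI hyw
      have hxmem : x ∈ G.neighborFinset y ∩ G.neighborFinset w := by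
        rw [Finset.mem_inter, SimpleGraph.mem_neighborFinset, SimpleGraph.mem_neighborFinset]
        exact ⟨((SimpleGraph.mem_neighborFinset G x y).mp (hIN hyI)).symm,
          ((SimpleGraph.mem_neighborFinset G x w).mp (hIN hwI)).symm⟩
      have hsub2 : N.filter (fun z => ∀ a ∈ ({y, w} : Finset V), G.Adj a z) ⊆
          (G.neighborFinset y ∩ G.neighborFinset w).erase x := by
        intro z hz
        rw [Finset.mem_filter] at hz
        rw [Finset.mem_erase, Finset.mem_inter, SimpleGraph.mem_neighborFinset,
          SimpleGraph.mem_neighborFinset]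
        exact ⟨fun h => hxN (h ▸ hz.1), hz.2 y (by simp), hz.2 w (by simp)⟩
      calc (N.filter (fun z => ∀ a ∈ ({y, w} : Finset V), G.Adj a z)).card
          ≤ ((G.neighborFinset y ∩ G.neighborFinset w).erase x).card :=
            Finset.card_le_card hsub2
        _ = (G.neighborFinset y ∩ G.neighborFinset w).card - 1 :=
            Finset.card_erase_of_mem hxmem
        _ ≤ c - 1 := Nat.sub_le_sub_right (hmu y w hyw hnadj) 1
    calc B.card ≤ ((Finset.powersetCard 2 I).biUnion
          (fun p => N.filter (fun z => ∀ y ∈ p, G.Adj y z))).card :=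
          Finset.card_le_card hBsub
      _ ≤ ∑ p ∈ Finset.powersetCard 2 I, (N.filter (fun z => ∀ y ∈ p, G.Adj y z)).card :=
          Finset.card_biUnion_le
      _ ≤ ∑ _p ∈ Finset.powersetCard 2 I, (c - 1) := Finset.sum_le_sum hW
      _ = t.choose 2 * (c - 1) := by
          rw [Finset.sum_const, Finset.card_powersetCard, smul_eq_mul, ht]
      _ ≤ E := Nat.mul_le_mul_right _ (Nat.choose_le_choose 2 htk)
  -- the pieces are cliques
  have hSclique : ∀ y ∈ I, ∀ u ∈ S y, ∀ v ∈ S y, u ≠ v → G.Adj u v := by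
    intro y hy u hu v hv huv
    by_contra hnadj
    have ht1 : 1 ≤ t := Finset.card_pos.mpr ⟨y, hy⟩
    obtain ⟨hu1, hu2⟩ := hSmem y u hu
    obtain ⟨hv1, hv2⟩ := hSmem y v hv
    have hnotinerase : ∀ z ∈ S y, z ∉ I.erase y := by
      intro z hz hze
      obtain ⟨hz1, hz2⟩ := hSmem y z hz
      have h1 := Finset.mem_erase.mp hze
      rcases hz1 with rfl | hadj
      · exact h1.1 rfl
      · exact hIind y hy z h1.2 (fun he => h1.1 he.symm) hadj
    have huI := hnotinerase u hu
    have hvI := hnotinerase v hv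
    have huJ : u ∉ insert v (I.erase y) := by
      rw [Finset.mem_insert]; push_neg; exact ⟨huv, huI⟩
    have hJN : insert u (insert v (I.erase y)) ⊆ N := by
      intro z hz
      rcases Finset.mem_insert.mp hz with rfl | hz
      · exact hSN y z hu
      · rcases Finset.mem_insert.mp hz with rfl | hz
        · exact hSN y z hv
        · exact hIN (Finset.mem_of_mem_erase hz)
    have hJP : P (insert u (insert v (I.erase y))) := by
      have hone : ∀ z ∈ insert u (insert v (I.erase y)),
          z = u ∨ z = v ∨ (z ∈ I ∧ z ≠ y) := by
        intro z hz
        rcases Finset.mem_insert.mp hz with rfl | hz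
        · exact Or.inl rfl
        rcases Finset.mem_insert.mp hz with rfl | hz
        · exact Or.inr (Or.inl rfl)
        · exact Or.inr (Or.inr ⟨Finset.mem_of_mem_erase hz, (Finset.mem_erase.mp hz).1⟩)
      intro a ha b hb hab
      rcases hone a ha with rfl | rfl | ⟨ha1, ha2⟩ <;>
        rcases hone b hb with rfl | rfl | ⟨hb1, hb2⟩
      · exact absurd rfl hab
      · exact hnadj
      · exact fun h => hu2 b hb1 hb2 h.symm
      · exact fun h => hnadj h.symm
      · exact absurd rfl hab
      · exact fun h => hv2 b hb1 hb2 h.symm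
      · exact hu2 a ha1 ha2
      · exact hv2 a ha1 ha2
      · exact hIind a ha1 b hb1 hab
    have hcard := hmaxI _ hJN hJP
    rw [Finset.card_insert_of_notMem huJ, Finset.card_insert_of_notMem hvI,
      Finset.card_erase_of_mem hy] at hcard
    omega
  -- insert x makes each piece a clique
  have hSxclique : ∀ y ∈ I, G.IsClique ((insert x (S y) : Finset V) : Set V) := by
    intro y hy
    rw [SimpleGraph.isClique_iff]
    intro a ha b hb hab
    simp only [Finset.coe_insert, Set.mem_insert_iff, Finset.mem_coe] at ha hb
    rcases ha with rfl | ha <;> rcases hb with rfl | hb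
    · exact absurd rfl hab
    · exact (SimpleGraph.mem_neighborFinset G a b).mp (hSN y b hb)
    · exact ((SimpleGraph.mem_neighborFinset G b a).mp (hSN y a ha)).symm
    · exact hSclique y hy a ha b hb hab
  -- some maximal clique exists, hence the degree is large
  obtain ⟨C₀, hC₀max, hxC₀⟩ := exists_maximal_clique_ext G {x} (by simp)
  have hdr : r + 1 ≤ d := by
    have h1 := hmax C₀ hC₀max (hxC₀ (Finset.mem_singleton_self x))
    have h2 : 1 ≤ C₀.card := Finset.card_pos.mpr ⟨x, hxC₀ (Finset.mem_singleton_self x)⟩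
    omega
  have hNne : N.Nonempty := Finset.card_pos.mp (by omega)
  have hIne : I.Nonempty := by
    obtain ⟨z, hz⟩ := hNne
    rcases Finset.eq_empty_or_nonempty I with rfl | h
    · exfalso
      have : ({z} : Finset V).card ≤ t := hmaxI {z}
        (Finset.singleton_subset_iff.mpr hz) (by intro u hu w hw hne; simp_all)
      simp [ht] at this
    · exact h
  have ht1 : 1 ≤ t := Finset.card_pos.mpr hIne
  -- choose the largest piece
  obtain ⟨y₁, hy₁I, hy₁max⟩ := Finset.exists_max_image I (fun y => (S y).card) hIne
  -- counting: the pieces plus the bad set cover N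
  have hsum : d ≤ E + t * (S y₁).card := by
    have h1 : N ⊆ B ∪ I.biUnion S := by
      intro z hz
      by_cases hzB : z ∈ B
      · exact Finset.mem_union_left _ hzB
      · obtain ⟨y, hyI, hzS⟩ := hcover z hz hzB
        exact Finset.mem_union_right _ (Finset.mem_biUnion.mpr ⟨y, hyI, hzS⟩)
    have h2 : N.card ≤ B.card + ∑ y ∈ I, (S y).card :=
      (Finset.card_le_card h1).trans ((Finset.card_union_le _ _).trans
        (Nat.add_le_add_left Finset.card_biUnion_le _))
    have h3 : ∑ y ∈ I, (S y).card ≤ t * (S y₁).card := by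
      calc ∑ y ∈ I, (S y).card ≤ ∑ _y ∈ I, (S y₁).card :=
            Finset.sum_le_sum (fun y hy => hy₁max y hy)
        _ = t * (S y₁).card := by rw [Finset.sum_const, smul_eq_mul, ht]
    omega
  -- the first maximal clique
  obtain ⟨C₁, hC₁max, hsubC₁⟩ := exists_maximal_clique_ext G (insert x (S y₁))
    (hSxclique y₁ hy₁I)
  have hxC₁ : x ∈ C₁ := hsubC₁ (Finset.mem_insert_self x _)
  have hSy₁C₁ : S y₁ ⊆ C₁ := fun z hz => hsubC₁ (Finset.mem_insert_of_mem hz)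
  have hxSy₁ : x ∉ S y₁ := fun h => hxN (hSN y₁ x h)
  have hC₁card : (S y₁).card + 1 ≤ C₁.card := by
    have h1 := Finset.card_le_card hsubC₁
    rw [Finset.card_insert_of_notMem hxSy₁] at h1
    omega
  have bound1 : ((d : ℝ) - (k.choose 2 : ℝ) * ((c : ℝ) - 1)) / (k : ℝ) + 1 ≤ (C₁.card : ℝ) := by
    rw [← hEr]
    have h1 : ((d : ℝ) - (E : ℝ)) / (k : ℝ) ≤ ((S y₁).card : ℝ) := by
      rw [div_le_iff₀ hkpos]
      have h2 : d ≤ E + k * (S y₁).card :=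
        hsum.trans (Nat.add_le_add_left (Nat.mul_le_mul_right _ htk) _)
      have h3 : (d : ℝ) ≤ (E : ℝ) + (k : ℝ) * ((S y₁).card : ℝ) := by exact_mod_cast h2
      linarith
    have h4 : ((S y₁).card : ℝ) + 1 ≤ (C₁.card : ℝ) := by exact_mod_cast hC₁card
    linarith
  -- the clique C₁ is small, so many neighbors are left over
  have hC₁d := hmax C₁ hC₁max hxC₁
  set M := N \ C₁ with hM
  have hNC₁ : (N ∩ C₁) ⊆ C₁.erase x := by
    intro z hz
    rw [Finset.mem_inter] at hz
    exact Finset.mem_erase.mpr ⟨fun h => hxN (h ▸ hz.1), hz.2⟩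
  have hNC₁card : (N ∩ C₁).card ≤ C₁.card - 1 :=
    (Finset.card_le_card hNC₁).trans_eq (Finset.card_erase_of_mem hxC₁)
  have hMeq : M.card + (N ∩ C₁).card = N.card := Finset.card_sdiff_add_card_inter N C₁
  have h1C₁ : 1 ≤ C₁.card := Finset.card_pos.mpr ⟨x, hxC₁⟩
  have hMcard : r + 1 ≤ M.card := by omega
  by_cases hcase : r + 1 ≤ E
  · -- degenerate case : the second bound is trivial
    obtain ⟨z, hzM⟩ : M.Nonempty := Finset.card_pos.mp (by omega)
    rw [Finset.mem_sdiff] at hzM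
    have hzx : z ≠ x := fun h => hxN (h ▸ hzM.1)
    have hclique : G.IsClique (({x, z} : Finset V) : Set V) := by
      rw [SimpleGraph.isClique_iff]
      intro a ha b hb hab
      simp only [Finset.coe_insert, Set.mem_insert_iff, Finset.coe_singleton,
        Set.mem_singleton_iff] at ha hb
      have hadj : G.Adj x z := (SimpleGraph.mem_neighborFinset G x z).mp hzM.1
      rcases ha with rfl | rfl <;> rcases hb with rfl | rfl
      · exact absurd rfl hab
      · exact hadj
      · exact hadj.symm
      · exact absurd rfl hab
    obtain ⟨C₂, hC₂max, hsubC₂⟩ := exists_maximal_clique_ext G {x, z} hclique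
    have hxC₂ : x ∈ C₂ := hsubC₂ (by simp)
    have hzC₂ : z ∈ C₂ := hsubC₂ (by simp)
    refine ⟨C₁, C₂, fun h => hzM.2 (h ▸ hzC₂), hC₁max, hC₂max, hxC₁, hxC₂, bound1, ?_⟩
    have h2 : 2 ≤ C₂.card := by
      have := Finset.card_le_card hsubC₂
      rwa [Finset.card_pair (fun h => hzx h.symm)] at this
    have h3 : (2 : ℝ) ≤ (C₂.card : ℝ) := by exact_mod_cast h2
    have h4 : (r : ℝ) - (k.choose 2 : ℝ) * ((c : ℝ) - 1) + 1 ≤ 0 := by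
      rw [← hEr]
      have : (r : ℝ) + 1 ≤ (E : ℝ) := by exact_mod_cast hcase
      linarith
    have h5 : ((r : ℝ) - (k.choose 2 : ℝ) * ((c : ℝ) - 1) + 1) / ((k : ℝ) - 1) ≤ 0 :=
      div_nonpos_of_nonpos_of_nonneg h4 (by linarith)
    linarith
  · -- main case
    have hMB : (M \ B) ⊆ (I.erase y₁).biUnion (fun y => S y \ C₁) := by
      intro z hz
      rw [Finset.mem_sdiff] at hz
      have hz1 := Finset.mem_sdiff.mp hz.1
      obtain ⟨y, hyI, hzS⟩ := hcover z hz1.1 hz.2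
      have hyy₁ : y ≠ y₁ := fun h => hz1.2 (hSy₁C₁ (h ▸ hzS))
      exact Finset.mem_biUnion.mpr ⟨y, Finset.mem_erase.mpr ⟨hyy₁, hyI⟩,
        Finset.mem_sdiff.mpr ⟨hzS, hz1.2⟩⟩
    have hMBcard : r + 1 - E ≤ (M \ B).card := by
      have := Finset.card_le_card_sdiff_add_card (s := M) (t := B)
      omega
    have hMBne : (M \ B).Nonempty := Finset.card_pos.mp (by omega)
    have hIe : (I.erase y₁).Nonempty := by
      obtain ⟨z, hz⟩ := hMBne
      obtain ⟨y, hy, -⟩ := Finset.mem_biUnion.mp (hMB hz)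
      exact ⟨y, hy⟩
    obtain ⟨y₂, hy₂e, hy₂max⟩ := Finset.exists_max_image (I.erase y₁)
      (fun y => (S y \ C₁).card) hIe
    have hy₂I : y₂ ∈ I := Finset.mem_of_mem_erase hy₂e
    have hsum2 : (M \ B).card ≤ (t - 1) * (S y₂ \ C₁).card := by
      calc (M \ B).card ≤ ((I.erase y₁).biUnion (fun y => S y \ C₁)).card :=
            Finset.card_le_card hMB
        _ ≤ ∑ y ∈ I.erase y₁, (S y \ C₁).card := Finset.card_biUnion_le
        _ ≤ ∑ _y ∈ I.erase y₁, (S y₂ \ C₁).card :=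
            Finset.sum_le_sum (fun y hy => hy₂max y hy)
        _ = (t - 1) * (S y₂ \ C₁).card := by
            rw [Finset.sum_const, smul_eq_mul, Finset.card_erase_of_mem hy₁I, ht]
    have hy₂pos : 1 ≤ (S y₂ \ C₁).card := by
      rcases Nat.eq_zero_or_pos (S y₂ \ C₁).card with h0 | h
      · rw [h0, Nat.mul_zero] at hsum2; omega
      · exact h
    have hclique : G.IsClique ((insert x (S y₂ \ C₁) : Finset V) : Set V) := by
      refine (hSxclique y₂ hy₂I).subset ?_
      have h1 : (insert x (S y₂ \ C₁) : Finset V) ⊆ insert x (S y₂) :=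
        Finset.insert_subset_insert _ (Finset.sdiff_subset)
      exact_mod_cast Finset.coe_subset.mpr h1
    obtain ⟨C₂, hC₂max, hsubC₂⟩ := exists_maximal_clique_ext G (insert x (S y₂ \ C₁)) hclique
    have hxC₂ : x ∈ C₂ := hsubC₂ (Finset.mem_insert_self x _)
    obtain ⟨z, hzS₂⟩ : (S y₂ \ C₁).Nonempty := Finset.card_pos.mp hy₂pos
    have hzC₂ : z ∈ C₂ := hsubC₂ (Finset.mem_insert_of_mem hzS₂)
    have hzC₁ : z ∉ C₁ := (Finset.mem_sdiff.mp hzS₂).2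
    refine ⟨C₁, C₂, fun h => hzC₁ (h ▸ hzC₂), hC₁max, hC₂max, hxC₁, hxC₂, bound1, ?_⟩
    have hxS₂ : x ∉ S y₂ \ C₁ := fun h => hxN (hSN y₂ x (Finset.mem_sdiff.mp h).1)
    have hC₂card : (S y₂ \ C₁).card + 1 ≤ C₂.card := by
      have h1 := Finset.card_le_card hsubC₂
      rw [Finset.card_insert_of_notMem hxS₂] at h1
      omega
    rw [← hEr]
    have h1 : ((r : ℝ) - (E : ℝ) + 1) / ((k : ℝ) - 1) ≤ ((S y₂ \ C₁).card : ℝ) := by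
      rw [div_le_iff₀ hk1pos]
      have h2 : r + 1 - E ≤ (k - 1) * (S y₂ \ C₁).card := by
        have h3 : (t - 1) * (S y₂ \ C₁).card ≤ (k - 1) * (S y₂ \ C₁).card :=
          Nat.mul_le_mul_right _ (by omega)
        omega
      have h4 : ((r : ℝ) + 1 - (E : ℝ)) ≤ ((k : ℝ) - 1) * ((S y₂ \ C₁).card : ℝ) := by
        have h5 : ((r + 1 - E : ℕ) : ℝ) ≤ (((k - 1) * (S y₂ \ C₁).card : ℕ) : ℝ) := by
          exact_mod_cast h2
        have h6 : (E : ℝ) ≤ (r : ℝ) := by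
          have : E ≤ r := by omega
          exact_mod_cast this
        rw [Nat.cast_mul, Nat.cast_sub (by omega : E ≤ r + 1), Nat.cast_sub
          (by omega : 1 ≤ k)] at h5
        push_cast at h5 ⊢
        linarith
      linarith
    have h7 : ((S y₂ \ C₁).card : ℝ) + 1 ≤ (C₂.card : ℝ) := by exact_mod_cast hC₂card
    linarith
end

section
/- Let s be a positive integer and p₂ := (s−1)(2s−1)+1. Let G be the finite simple graph whose vertex set is the disjoint union of a set U = {u₁,…,u_s} of size s and two disjoint sets C₁, C₂ each of size p₂, in which two distinct vertices are adjacent if and only if they both lie in U, or they both lie in the same set Cᵢ, or one lies in U and the other lies in C₁ ∪ C₂. Then the smallest eigenvalue of the adjacency matrix of G is strictly less than −s. -/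
/-- Auxiliary projection: `none` for vertices of `U`, `some i` for vertices of clique `Cᵢ`. -/
def uCliquesProj {s t p : ℕ} : Fin s ⊕ (Fin t × Fin p) → Option (Fin t)
  | Sum.inl _ => none
  | Sum.inr x => some x.1

/-- The graph consisting of a clique `U` of order `s`, and `t` pairwise disjoint cliques
`C₁, …, C_t` of order `p` (with no edges between distinct cliques `Cᵢ`),
where every vertex of `U` is adjacent to every vertex of every `Cᵢ`. -/
def cliqueJoinCliques (s t p : ℕ) : SimpleGraph (Fin s ⊕ (Fin t × Fin p)) where
  Adj a b := a ≠ b ∧ (uCliquesProj a = none ∨ uCliquesProj b = none ∨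
      uCliquesProj a = uCliquesProj b)
  symm := by
    constructor
    intro a b h
    exact ⟨Ne.symm h.1, by tauto⟩
  loopless := by
    constructor
    intro a h
    exact h.1 rfl

instance (s t p : ℕ) : DecidableRel (cliqueJoinCliques s t p).Adj := fun a b =>
  inferInstanceAs (Decidable (_ ∧ _))

open Matrix in
lemma mem_spectrum_of_eigvec {n : Type*} [Fintype n] [DecidableEq n]
    (M : Matrix n n ℝ) (μ : ℝ) (v : n → ℝ) (hv : v ≠ 0)
    (h : M.mulVec v = μ • v) : μ ∈ spectrum ℝ M := by
  rw [spectrum.mem_iff]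
  intro hU
  rw [Matrix.isUnit_iff_isUnit_det] at hU
  have hdet : (algebraMap ℝ (Matrix n n ℝ) μ - M).det = 0 := by
    rw [← Matrix.exists_mulVec_eq_zero_iff]
    refine ⟨v, hv, ?_⟩
    rw [Matrix.sub_mulVec, h]
    ext x
    simp [Matrix.algebraMap_eq_diagonal, Matrix.mulVec_diagonal]
  rw [hdet] at hU
  exact hU.ne_zero rfl

lemma rowU (s p : ℕ) (a b : ℝ) (u : Fin s) :
    ((cliqueJoinCliques s 2 p).adjMatrix ℝ).mulVec
      (Sum.elim (fun _ => a) (fun _ => b)) (Sum.inl u) = (s-1:ℝ)*a + 2*p*b := by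
  rw [Matrix.mulVec]
  simp only [dotProduct, SimpleGraph.adjMatrix_apply, Fintype.sum_sum_type]
  simp only [cliqueJoinCliques, uCliquesProj]
  simp
  have h1 : ∀ x : Fin s, (if u = x then (0:ℝ) else a) = a - (if u = x then a else 0) := by
    intro x; split <;> ring
  simp [h1, Finset.sum_sub_distrib, Finset.sum_ite_eq]
  ring

lemma rowC (s p : ℕ) (a b : ℝ) (z : Fin 2 × Fin p) :
    ((cliqueJoinCliques s 2 p).adjMatrix ℝ).mulVec
      (Sum.elim (fun _ => a) (fun _ => b)) (Sum.inr z) = (s:ℝ)*a + (p-1:ℝ)*b := by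
  rw [Matrix.mulVec]
  simp only [dotProduct, SimpleGraph.adjMatrix_apply, Fintype.sum_sum_type]
  simp only [cliqueJoinCliques, uCliquesProj]
  simp
  have h1 : ∀ x : Fin 2 × Fin p, (if ¬z = x ∧ z.1 = x.1 then b else 0)
      = (if z.1 = x.1 then (if z.2 = x.2 then 0 else b) else 0) := by
    rintro ⟨x1, x2⟩
    by_cases h1 : z.1 = x1 <;> by_cases h2 : z.2 = x2 <;>
      simp [Prod.ext_iff, h1, h2]
  have h2 : ∀ x : Fin p, (if z.2 = x then (0:ℝ) else b) = b - (if z.2 = x then b else 0) := by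
    intro x; split <;> ring
  simp only [h1]
  rw [Fintype.sum_prod_type]
  simp [Finset.sum_ite_eq, h2, Finset.sum_sub_distrib]
  ring

theorem statement5 (s : ℕ) (hs : 0 < s) :
    ∃ μ ∈ spectrum ℝ ((cliqueJoinCliques s 2 ((s - 1) * (2 * s - 1) + 1)).adjMatrix ℝ),
      μ < -(s : ℝ) := by
  set p : ℕ := (s - 1) * (2 * s - 1) + 1 with hpdef
  set S : ℝ := (s : ℝ) with hSdef
  have hs1 : (1:ℝ) ≤ S := by rw [hSdef]; exact_mod_cast hs
  have hP : (p:ℝ) = 2*S^2 - 3*S + 2 := by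
    rw [hpdef]
    push_cast [Nat.cast_sub hs, Nat.cast_sub (show 1 ≤ 2*s by omega)]
    ring
  set P : ℝ := (p : ℝ) with hPdef
  set D : ℝ := ((S + P - 2) + 2*S)^2 + 4 with hDdef
  have hD0 : (0:ℝ) ≤ D := by positivity
  set r : ℝ := Real.sqrt D with hrdef
  have hr2 : r ^ 2 = D := Real.sq_sqrt hD0
  set μ : ℝ := ((S + P - 2) - r) / 2 with hμdef
  have hP1 : (1:ℝ) ≤ P := by rw [hP]; nlinarith
  have hlt : (S + P - 2) + 2*S < r := by
    rw [hrdef]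
    rw [Real.lt_sqrt (by nlinarith)]
    rw [hDdef]; nlinarith
  have hμlt : μ < -S := by rw [hμdef]; linarith
  have key : μ ^ 2 - (S + P - 2) * μ + ((S-1)*(P-1) - 2*P*S) = 0 := by
    rw [hμdef]
    linear_combination (1/4) * hr2 - hP
  refine ⟨μ, ?_, hμlt⟩
  apply mem_spectrum_of_eigvec _ _ (Sum.elim (fun _ => μ - (P - 1)) (fun _ => S))
  · intro h
    have := congrFun h (Sum.inr ((0 : Fin 2), (⟨0, by omega⟩ : Fin p)))
    simp at this
    linarith
  · funext x
    cases x with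
    | inl u =>
        rw [rowU]
        simp only [Pi.smul_apply, Sum.elim_inl, smul_eq_mul]
        linear_combination -key
    | inr z =>
        rw [rowC]
        simp only [Pi.smul_apply, Sum.elim_inr, smul_eq_mul]
        ring
end
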